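/- Let p be a prime, n, m ≥ 1, and GR(p^n,m) = (ZMod (p^n))[X]/(f) for a monic basic irreducible f of degree m. Then the quotient ring GR(p^n,m) ⧸ (ideal generated by p) is a finite field with exactly p^m elements. -/

import Mathlib

/-- For the Galois ring `GR(p^n, m) = (ZMod (p^n))[X] ⧸ (f)`, with `f` monic
basic irreducible of degree `m`, the quotient by the ideal generated by `p` is a finite field
with exactly `p ^ m` elements. -/
theorem galois_ring_residue_field (p n m : ℕ) (hp : p.Prime) (hn : 0 < n) (hm : 0 < m)
    (f : Polynomial (ZMod (p ^ n))) (hf : f.Monic) (hdeg : f.natDegree = m)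
    (hirr : Irreducible (f.map (ZMod.castHom (dvd_pow_self p hn.ne') (ZMod p)))) :
    IsField (AdjoinRoot f ⧸ Ideal.span {(p : AdjoinRoot f)}) ∧
      Nat.card (AdjoinRoot f ⧸ Ideal.span {(p : AdjoinRoot f)}) = p ^ m := by
  haveI : Fact p.Prime := ⟨hp⟩
  haveI : NeZero (p ^ n) := ⟨pow_ne_zero n hp.ne_zero⟩
  set φ : ZMod (p ^ n) →+* ZMod p := ZMod.castHom (dvd_pow_self p hn.ne') (ZMod p) with hφ
  set I : Ideal (ZMod (p ^ n)) := Ideal.span {(p : ZMod (p ^ n))} with hI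
  -- kernel of φ is I
  have hker : RingHom.ker φ = I := by
    ext x
    simp only [RingHom.mem_ker, hI, Ideal.mem_span_singleton]
    constructor
    · intro hx
      have hx' : ((x.val : ℕ) : ZMod p) = 0 := by
        rw [← ZMod.natCast_zmod_val x] at hx
        rwa [← map_natCast φ]
      obtain ⟨k, hk⟩ := (ZMod.natCast_eq_zero_iff _ _).mp hx'
      refine ⟨(k : ZMod (p ^ n)), ?_⟩
      rw [← ZMod.natCast_zmod_val x, hk]
      push_cast
      ring
    · rintro ⟨c, rfl⟩
      rw [map_mul, map_natCast, ZMod.natCast_self, zero_mul]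
  have hsurj : Function.Surjective φ := by
    intro y
    refine ⟨((y.val : ℕ) : ZMod (p ^ n)), ?_⟩
    rw [map_natCast, ZMod.natCast_zmod_val]
  -- the base equivalence ZMod (p^n) ⧸ I ≃+* ZMod p
  let e0 : (ZMod (p ^ n) ⧸ I) ≃+* ZMod p :=
    (Ideal.quotEquivOfEq hker.symm).trans (RingHom.quotientKerEquivOfSurjective hsurj)
  have he0 : ∀ x : ZMod (p ^ n), e0 (Ideal.Quotient.mk I x) = φ x := fun x => rfl
  -- span {p} in AdjoinRoot f is the map of I
  have hspan : Ideal.span {(p : AdjoinRoot f)} = I.map (AdjoinRoot.of f) := by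
    rw [hI, Ideal.map_span, Set.image_singleton, map_natCast]
  let E1 : (AdjoinRoot f ⧸ Ideal.span {(p : AdjoinRoot f)}) ≃+*
      (AdjoinRoot f ⧸ I.map (AdjoinRoot.of f)) := Ideal.quotEquivOfEq hspan
  let E2 := AdjoinRoot.quotAdjoinRootEquivQuotPolynomialQuot I f
  -- polynomial quotient equivalence under e0
  have hmapmap : (f.map (Ideal.Quotient.mk I)).map (e0 : (ZMod (p ^ n) ⧸ I) →+* ZMod p)
      = f.map φ := by
    rw [Polynomial.map_map]
    rfl
  let E3 : (Polynomial (ZMod (p ^ n) ⧸ I) ⧸ Ideal.span {f.map (Ideal.Quotient.mk I)}) ≃+*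
      (Polynomial (ZMod p) ⧸ Ideal.span {f.map φ}) :=
    Ideal.quotientEquiv _ _ (Polynomial.mapEquiv e0) (by
      rw [Ideal.map_span, Set.image_singleton]
      congr 1
      exact congrArg singleton hmapmap.symm)
  let E : (AdjoinRoot f ⧸ Ideal.span {(p : AdjoinRoot f)}) ≃+* AdjoinRoot (f.map φ) :=
    E1.trans (E2.trans E3)
  -- the target is a field
  haveI : Fact (Irreducible (f.map φ)) := ⟨hirr⟩
  have hfield : IsField (AdjoinRoot (f.map φ)) := Field.toIsField _
  -- cardinality
  have hg0 : f.map φ ≠ 0 := hirr.ne_zero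
  let pb := AdjoinRoot.powerBasis hg0
  haveI : Module.Finite (ZMod p) (AdjoinRoot (f.map φ)) := Module.Finite.of_basis pb.basis
  haveI : Finite (AdjoinRoot (f.map φ)) := Module.finite_of_finite (ZMod p)
  have hdim : Module.finrank (ZMod p) (AdjoinRoot (f.map φ)) = m := by
    rw [pb.finrank, AdjoinRoot.powerBasis_dim, hf.natDegree_map φ, hdeg]
  have hcard : Nat.card (AdjoinRoot (f.map φ)) = p ^ m := by
    cases nonempty_fintype (AdjoinRoot (f.map φ))
    rw [Nat.card_eq_fintype_card, Module.card_eq_pow_finrank (K := ZMod p), ZMod.card, hdim]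
  refine ⟨E.toMulEquiv.isField hfield, ?_⟩
  rw [Nat.card_congr E.toEquiv, hcard]
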